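/- Let C be a (possibly noncommutative) ring, B a subring of C, Q a left C-module, T a subset of Q, and s ∈ C an element such that the commutator cs − sc lies in B for every c ∈ B. Let B⟨s⟩ denote the subring of C generated by B and s. Then the additive subgroup of Q generated by {x·t : x ∈ B⟨s⟩, t ∈ T} equals the additive subgroup of Q generated by {s^n·b·t : n ≥ 0, b ∈ B, t ∈ T}. -/

import Mathlib

theorem stmt_2 (C : Type*) [Ring C] (B : Subring C)
    (Q : Type*) [AddCommGroup Q] [Module C Q] (T : Set Q) (s : C)
    (hs : ∀ c ∈ B, c * s - s * c ∈ B) :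
    AddSubgroup.closure {y : Q | ∃ x ∈ Subring.closure (↑B ∪ {s}), ∃ t ∈ T, y = x • t}
      = AddSubgroup.closure {y : Q | ∃ (n : ℕ), ∃ b ∈ B, ∃ t ∈ T, y = s ^ n • b • t} := by
  set g : Set C := {x : C | ∃ (n : ℕ), ∃ b ∈ B, x = s ^ n * b} with hg
  set G := AddSubgroup.closure g with hGdef
  have hgen : ∀ (n : ℕ), ∀ b ∈ B, s ^ n * b ∈ G :=
    fun n b hb => AddSubgroup.subset_closure ⟨n, b, hb, rfl⟩
  have hsG : ∀ x ∈ G, s * x ∈ G := by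
    intro x hx
    induction hx using AddSubgroup.closure_induction with
    | mem x hx =>
      obtain ⟨n, b, hb, rfl⟩ := hx
      rw [← mul_assoc, ← pow_succ']
      exact hgen _ _ hb
    | zero => simpa using G.zero_mem
    | add x y _ _ hx hy => rw [mul_add]; exact G.add_mem hx hy
    | neg x _ hx => rw [mul_neg]; exact G.neg_mem hx
  have hcomm : ∀ (n : ℕ), ∀ b ∈ B, b * s ^ n ∈ G := by
    intro n
    induction n with
    | zero => intro b hb; simpa using hgen 0 b hb
    | succ n ih =>
      intro b hb
      have key : b * s ^ (n + 1) = s * (b * s ^ n) + (b * s - s * b) * s ^ n := by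
        rw [pow_succ']; noncomm_ring
      rw [key]
      exact G.add_mem (hsG _ (ih b hb)) (ih _ (hs b hb))
  have hmulB : ∀ x ∈ G, ∀ b ∈ B, x * b ∈ G := by
    intro x hx
    induction hx using AddSubgroup.closure_induction with
    | mem x hx =>
      intro b hb
      obtain ⟨n, b', hb', rfl⟩ := hx
      rw [mul_assoc]
      exact hgen n _ (B.mul_mem hb' hb)
    | zero => intro b hb; simpa using G.zero_mem
    | add x y _ _ hx hy => intro b hb; rw [add_mul]; exact G.add_mem (hx b hb) (hy b hb)
    | neg x _ hx => intro b hb; rw [neg_mul]; exact G.neg_mem (hx b hb)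
  have hBl : ∀ b ∈ B, ∀ x ∈ G, b * x ∈ G := by
    intro b hb x hx
    induction hx using AddSubgroup.closure_induction with
    | mem x hx =>
      obtain ⟨n, b', hb', rfl⟩ := hx
      rw [← mul_assoc]
      exact hmulB _ (hcomm n b hb) b' hb'
    | zero => simpa using G.zero_mem
    | add x y _ _ hx hy => rw [mul_add]; exact G.add_mem hx hy
    | neg x _ hx => rw [mul_neg]; exact G.neg_mem hx
  have hsPow : ∀ (n : ℕ), ∀ x ∈ G, s ^ n * x ∈ G := by
    intro n
    induction n with
    | zero => intro x hx; simpa using hx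
    | succ n ih =>
      intro x hx
      rw [pow_succ', mul_assoc]
      exact hsG _ (ih x hx)
  have hmul : ∀ x ∈ G, ∀ y ∈ G, x * y ∈ G := by
    intro x hx
    induction hx using AddSubgroup.closure_induction with
    | mem x hx =>
      intro y hy
      obtain ⟨n, b, hb, rfl⟩ := hx
      rw [mul_assoc]
      exact hsPow n _ (hBl b hb y hy)
    | zero => intro y hy; simpa using G.zero_mem
    | add x y _ _ hx hy => intro z hz; rw [add_mul]; exact G.add_mem (hx z hz) (hy z hz)
    | neg x _ hx => intro z hz; rw [neg_mul]; exact G.neg_mem (hx z hz)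
  set S : Subring C :=
    { carrier := (G : Set C)
      mul_mem' := fun hx hy => hmul _ hx _ hy
      one_mem' := by simpa using hgen 0 1 B.one_mem
      add_mem' := fun hx hy => G.add_mem hx hy
      zero_mem' := G.zero_mem
      neg_mem' := fun hx => G.neg_mem hx } with hSdef
  have hsub : Subring.closure (↑B ∪ {s}) ≤ S := by
    rw [Subring.closure_le]
    rintro x (hx | hx)
    · show _ ∈ G; simpa using hgen 0 x hx
    · rcases hx with rfl
      show _ ∈ G; simpa using hgen 1 1 B.one_mem
  apply le_antisymm
  · rw [AddSubgroup.closure_le]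
    rintro y ⟨x, hx, t, ht, rfl⟩
    have hxG : x ∈ G := hsub hx
    clear hx
    induction hxG using AddSubgroup.closure_induction with
    | mem x hx =>
      obtain ⟨n, b, hb, rfl⟩ := hx
      exact AddSubgroup.subset_closure ⟨n, b, hb, t, ht, by rw [mul_smul]⟩
    | zero => simpa using (AddSubgroup.closure _).zero_mem
    | add x y _ _ hx hy =>
      rw [add_smul]; exact AddSubgroup.add_mem _ hx hy
    | neg x _ hx =>
      rw [neg_smul]; exact AddSubgroup.neg_mem _ hx
  · rw [AddSubgroup.closure_le]
    rintro y ⟨n, b, hb, t, ht, rfl⟩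
    refine AddSubgroup.subset_closure ⟨s ^ n * b, ?_, t, ht, by rw [mul_smul]⟩
    have hsmem : s ∈ Subring.closure (↑B ∪ {s}) :=
      Subring.subset_closure (Or.inr rfl)
    have hbmem : (b : C) ∈ Subring.closure (↑B ∪ {s}) :=
      Subring.subset_closure (Or.inl hb)
    exact mul_mem (pow_mem hsmem n) hbmem
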